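/- Let F be a field, let λ, μ be nonzero elements of F, and let i, j be natural numbers. Then ⟨λ⟩_i · ⟨μ⟩_j = ⟨λμ⟩_{i ∧ j}. -/

import Mathlib

open scoped Pointwise

/-- Key combinatorial identity: `C(k,a) C(k,b) = ∑_c C(k,c) C(c,a) C(a, a+b-c)`. -/
lemma key_nat (k a b : ℕ) :
    k.choose a * k.choose b
      = ∑ c ∈ Finset.range (a + b + 1),
          k.choose c * (c.choose a * a.choose (a + b - c)) := by
  by_cases hak : a ≤ k
  · have hsplit : a + b + 1 = a + (b + 1) := by ring
    rw [hsplit, Finset.sum_range_add]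
    have h0 : ∑ c ∈ Finset.range a,
        k.choose c * (c.choose a * a.choose (a + b - c)) = 0 := by
      apply Finset.sum_eq_zero
      intro c hc
      rw [Nat.choose_eq_zero_of_lt (Finset.mem_range.mp hc)]
      ring
    rw [h0, zero_add]
    have hterm : ∀ d ∈ Finset.range (b + 1),
        k.choose (a + d) * ((a + d).choose a * a.choose (a + b - (a + d)))
          = k.choose a * ((k - a).choose d * a.choose (b - d)) := by
      intro d hd
      have hd' : d ≤ b := Nat.lt_succ_iff.mp (Finset.mem_range.mp hd)
      have hsub : a + b - (a + d) = b - d := by omega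
      rw [hsub]
      by_cases h : a + d ≤ k
      · have := Nat.choose_mul (n := k) (Nat.le_add_right a d)
        rw [Nat.add_sub_cancel_left] at this
        rw [← mul_assoc, this, mul_assoc]
      · rw [Nat.choose_eq_zero_of_lt (by omega : k < a + d),
          Nat.choose_eq_zero_of_lt (by omega : k - a < d)]
        ring
    rw [Finset.sum_congr rfl hterm, ← Finset.mul_sum]
    congr 1
    have hv := Nat.add_choose_eq (k - a) a b
    rw [Nat.sub_add_cancel hak] at hv
    rw [hv, Finset.Nat.sum_antidiagonal_eq_sum_range_succ_mk]
  · rw [Nat.choose_eq_zero_of_lt (by omega : k < a), zero_mul]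
    symm
    apply Finset.sum_eq_zero
    intro c _
    by_cases hck : c ≤ k
    · rw [Nat.choose_eq_zero_of_lt (by omega : c < a)]; ring
    · rw [Nat.choose_eq_zero_of_lt (by omega : k < c)]; ring

/-- Product of two generators expanded in the generators of the target space. -/
lemma prod_expand (F : Type*) [Field F] (lam mu : F) (a b : ℕ) :
    (fun k : ℕ => (k.choose a : F) * lam ^ k) * (fun k : ℕ => (k.choose b : F) * mu ^ k)
      = ∑ c ∈ Finset.range (a + b + 1),
          ((c.choose a * a.choose (a + b - c) : ℕ) : F)
            • (fun k : ℕ => (k.choose c : F) * (lam * mu) ^ k) := by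
  funext k
  rw [Pi.mul_apply, Finset.sum_apply]
  have : ((k.choose a * k.choose b : ℕ) : F)
      = ((∑ c ∈ Finset.range (a + b + 1),
          k.choose c * (c.choose a * a.choose (a + b - c)) : ℕ) : F) := by
    rw [key_nat]
  push_cast at this
  calc ((k.choose a : F) * lam ^ k) * ((k.choose b : F) * mu ^ k)
      = ((k.choose a : F) * (k.choose b : F)) * (lam * mu) ^ k := by
        rw [mul_pow]; ring
    _ = _ := by
        rw [this, Finset.sum_mul]
        apply Finset.sum_congr rfl
        intro c _
        simp only [Pi.smul_apply, smul_eq_mul]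
        push_cast
        ring

open scoped Classical in
/-- For positive integers `s`, `t`, `wedge F s t` is the largest value of `i + j + 1` over
pairs `0 ≤ i ≤ s-1`, `0 ≤ j ≤ t-1` such that the binomial coefficient `C(i+j, i)`, viewed
as an element of `F`, is nonzero; moreover `wedge F s 0 = wedge F 0 t = 0`. -/
noncomputable def wedge (F : Type*) [Field F] (s t : ℕ) : ℕ :=
  ((Finset.range s) ×ˢ (Finset.range t)).sup
    (fun p => if (((p.1 + p.2).choose p.1 : F)) ≠ 0 then p.1 + p.2 + 1 else 0)

lemma le_wedge (F : Type*) [Field F] {i j a d : ℕ} (ha : a < i) (hd : d < j)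
    (h : ((a + d).choose a : F) ≠ 0) : a + d + 1 ≤ wedge F i j := by
  classical
  have hmem : (a, d) ∈ (Finset.range i) ×ˢ (Finset.range j) := by
    simp [Finset.mem_product, ha, hd]
  have := Finset.le_sup (f := fun p : ℕ × ℕ =>
    if (((p.1 + p.2).choose p.1 : F)) ≠ 0 then p.1 + p.2 + 1 else 0) hmem
  rw [wedge]
  simpa [if_pos h] using this

/-- One-step descent. -/
lemma wedge_step (F : Type*) [Field F] {i j a b n : ℕ} (ha : a < i) (hb : b < j)
    (h : ((a + b).choose a : F) ≠ 0) (hn : a + b = n + 1) :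
    ∃ a' b', a' < i ∧ b' < j ∧ a' + b' = n ∧ ((n.choose a' : F) ≠ 0) := by
  match b, a with
  | 0, a =>
    have : a = n + 1 := by omega
    subst this
    exact ⟨n, 0, by omega, hb, by omega, by simp⟩
  | b + 1, 0 =>
    exact ⟨0, b, ha, by omega, by omega, by simp⟩
  | b + 1, a + 1 =>
    have hnn : n = a + b + 1 := by omega
    subst hnn
    have hp : ((a + 1) + (b + 1)).choose (a + 1)
        = (a + b + 1).choose a + (a + b + 1).choose (a + 1) := by
      have : (a + 1) + (b + 1) = (a + b + 1) + 1 := by omega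
      rw [this, Nat.choose_succ_succ']
    rw [hp] at h
    push_cast at h
    by_cases h1 : ((a + b + 1).choose a : F) ≠ 0
    · exact ⟨a, b + 1, by omega, hb, by omega, h1⟩
    · push_neg at h1
      refine ⟨a + 1, b, ha, by omega, by omega, ?_⟩
      intro h2
      rw [h1, h2, add_zero] at h
      exact h rfl

lemma wedge_exists (F : Type*) [Field F] {i j : ℕ} :
    ∀ n, (∃ a b, a < i ∧ b < j ∧ a + b = n ∧ ((n.choose a : F) ≠ 0)) →
    ∀ c ≤ n, ∃ a b, a < i ∧ b < j ∧ a + b = c ∧ ((c.choose a : F) ≠ 0) := by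
  intro n
  induction n with
  | zero =>
    intro h c hc
    obtain rfl : c = 0 := by omega
    exact h
  | succ n ih =>
    intro h c hc
    rcases eq_or_lt_of_le hc with rfl | hlt
    · exact h
    · obtain ⟨a, b, ha, hb, hab, hne⟩ := h
      rw [← hab] at hne
      exact ih (wedge_step F ha hb hne hab) c (by omega)

lemma exists_pair_of_lt_wedge (F : Type*) [Field F] {i j c : ℕ} (hc : c < wedge F i j) :
    ∃ a b, a < i ∧ b < j ∧ a + b = c ∧ ((c.choose a : F) ≠ 0) := by
  classical
  rw [wedge, Finset.lt_sup_iff] at hc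
  obtain ⟨⟨a, b⟩, hmem, hlt⟩ := hc
  simp only [Finset.mem_product, Finset.mem_range] at hmem
  by_cases h : ((a + b).choose a : F) ≠ 0
  · rw [if_pos h] at hlt
    exact wedge_exists F (a + b) ⟨a, b, hmem.1, hmem.2, rfl, h⟩ c (by omega)
  · rw [if_neg h] at hlt; omega

open scoped Classical in
/-- `geomSpace F lam s` is the subspace `⟨λ⟩ₛ` of the `F`-algebra of sequences `ℕ → F`:
for `λ ≠ 0` it is spanned by the sequences `k ↦ C(k, i) * λ ^ k` for `0 ≤ i ≤ s - 1`;
`⟨0⟩ₛ` is spanned by the Kronecker-delta sequences `k ↦ δ_{i,k}` for `0 ≤ i ≤ s - 1`;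
`⟨η⟩₀` is the zero subspace. -/
noncomputable def geomSpace (F : Type*) [Field F] (lam : F) (s : ℕ) : Submodule F (ℕ → F) :=
  if lam = 0 then
    Submodule.span F ((fun i : ℕ => (fun k : ℕ => if k = i then (1 : F) else 0)) '' {i | i < s})
  else
    Submodule.span F ((fun i : ℕ => (fun k : ℕ => (k.choose i : F) * lam ^ k)) '' {i | i < s})

/-- Let `F` be a field, `λ`, `μ` nonzero elements of `F`, and `i`, `j` natural numbers.
Then `⟨λ⟩ᵢ · ⟨μ⟩ⱼ = ⟨λμ⟩_{i ∧ j}`. -/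
theorem geomSpace_mul (F : Type*) [Field F] (lam mu : F) (hlam : lam ≠ 0) (hmu : mu ≠ 0)
    (i j : ℕ) :
    geomSpace F lam i * geomSpace F mu j = geomSpace F (lam * mu) (wedge F i j) := by
  classical
  have hlm : lam * mu ≠ 0 := mul_ne_zero hlam hmu
  rw [geomSpace, geomSpace, geomSpace, if_neg hlam, if_neg hmu, if_neg hlm,
    Submodule.span_mul_span]
  set w := wedge F i j with hw
  set g : ℕ → (ℕ → F) := fun c => fun k : ℕ => (k.choose c : F) * (lam * mu) ^ k with hg
  apply le_antisymm
  · rw [Submodule.span_le]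
    rintro x hx
    rw [Set.mem_mul] at hx
    obtain ⟨u, ⟨a, ha, rfl⟩, v, ⟨b, hb, rfl⟩, rfl⟩ := hx
    rw [SetLike.mem_coe, prod_expand]
    apply Submodule.sum_mem
    intro c hc
    by_cases hcoef : ((c.choose a * a.choose (a + b - c) : ℕ) : F) = 0
    · rw [hcoef, zero_smul]; exact Submodule.zero_mem _
    · apply Submodule.smul_mem
      apply Submodule.subset_span
      refine ⟨c, ?_, rfl⟩
      push_cast at hcoef
      have h1 : ((c.choose a : ℕ) : F) ≠ 0 := fun h => hcoef (by rw [h, zero_mul])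
      have h2 : ((a.choose (a + b - c) : ℕ) : F) ≠ 0 := fun h => hcoef (by rw [h, mul_zero])
      have hac : a ≤ c := by
        by_contra h
        rw [Nat.choose_eq_zero_of_lt (by omega), Nat.cast_zero] at h1
        exact h1 rfl
      have hcab : c ≤ a + b := by
        have := Finset.mem_range.mp hc; omega
      have hb' : b < j := hb
      have hd : c - a < j := by omega
      have : a + (c - a) + 1 ≤ w := by
        apply le_wedge F ha hd
        rwa [show a + (c - a) = c by omega]
      show c < w
      omega
  · rw [Submodule.span_le]
    have key : ∀ c, c < w → g c ∈ Submodule.span F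
        (((fun a : ℕ => (fun k : ℕ => (k.choose a : F) * lam ^ k)) '' {a | a < i}) *
         ((fun b : ℕ => (fun k : ℕ => (k.choose b : F) * mu ^ k)) '' {b | b < j})) := by
      intro c
      induction c using Nat.strong_induction_on with
      | _ c ih =>
        intro hcw
        obtain ⟨a, b, ha, hb, hab, hne⟩ := exists_pair_of_lt_wedge F hcw
        have hv : (fun k : ℕ => (k.choose a : F) * lam ^ k) *
            (fun k : ℕ => (k.choose b : F) * mu ^ k) ∈ Submodule.span F
              (((fun a : ℕ => (fun k : ℕ => (k.choose a : F) * lam ^ k)) '' {a | a < i}) *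
               ((fun b : ℕ => (fun k : ℕ => (k.choose b : F) * mu ^ k)) '' {b | b < j})) := by
          apply Submodule.subset_span
          exact Set.mul_mem_mul ⟨a, ha, rfl⟩ ⟨b, hb, rfl⟩
        rw [prod_expand, hab, Finset.sum_range_succ] at hv
        have hlast : ((c.choose a * a.choose (c - c) : ℕ) : F) = (c.choose a : F) := by
          simp
        rw [hlast] at hv
        have hsum : (∑ c' ∈ Finset.range c,
            ((c'.choose a * a.choose (c - c') : ℕ) : F) • g c')
            ∈ Submodule.span F
              (((fun a : ℕ => (fun k : ℕ => (k.choose a : F) * lam ^ k)) '' {a | a < i}) *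
               ((fun b : ℕ => (fun k : ℕ => (k.choose b : F) * mu ^ k)) '' {b | b < j})) := by
          apply Submodule.sum_mem
          intro c' hc'
          exact Submodule.smul_mem _ _ (ih c' (Finset.mem_range.mp hc')
            (lt_trans (Finset.mem_range.mp hc') hcw))
        have hmem : (c.choose a : F) • g c ∈ Submodule.span F
              (((fun a : ℕ => (fun k : ℕ => (k.choose a : F) * lam ^ k)) '' {a | a < i}) *
               ((fun b : ℕ => (fun k : ℕ => (k.choose b : F) * mu ^ k)) '' {b | b < j})) := by
          have := Submodule.sub_mem _ hv hsum
          simpa [hg] using this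
        have := Submodule.smul_mem _ ((c.choose a : F))⁻¹ hmem
        rwa [smul_smul, inv_mul_cancel₀ hne, one_smul] at this
    rintro x ⟨c, hc, rfl⟩
    exact key c hc
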